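/- arXiv:2312.09535 — 2 statements merged into one kernel-verified Lean document; each statement's English description precedes it below -/
import Mathlib

section
/- For an oil–vinegar central map F and any vectors o, o' in the oil space O, the polar form satisfies DF(o, o') = 0; equivalently, the oil space is totally isotropic for each polar bilinear form associated to F. -/
/-- For an oil–vinegar central map, the polar form vanishes on pairs of
oil-space vectors: the oil space is totally isotropic. -/
theorem oil_space_totally_isotropic {F : Type*} [Field F] [Fintype F]
    {v o m : ℕ}
    (α : Fin m → Fin (v + o) → Fin (v + o) → F)
    (Fc : (Fin (v + o) → F) → (Fin m → F))
    (hF : ∀ x k, Fc x k =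
      ∑ i : Fin (v + o), ∑ j : Fin (v + o), if (i : ℕ) < v ∧ i ≤ j then α k i j * x i * x j else 0)
    (DF : (Fin (v + o) → F) → (Fin (v + o) → F) → (Fin m → F))
    (hDF : ∀ x w, DF x w = Fc (x + w) - Fc x - Fc w) :
    ∀ x y : Fin (v + o) → F,
      (∀ i : Fin (v + o), (i : ℕ) < v → x i = 0) →
      (∀ i : Fin (v + o), (i : ℕ) < v → y i = 0) →
      DF x y = 0 := by
  have key : ∀ (z : Fin (v + o) → F), (∀ i : Fin (v + o), (i : ℕ) < v → z i = 0) →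
      ∀ k, Fc z k = 0 := by
    intro z hz k
    rw [hF]
    refine Finset.sum_eq_zero fun i _ => Finset.sum_eq_zero fun j _ => ?_
    split_ifs with h
    · rw [hz i h.1]; ring
    · rfl
  intro x y hx hy
  funext k
  have hxy : ∀ i : Fin (v + o), (i : ℕ) < v → (x + y) i = 0 := by
    intro i hi
    simp [hx i hi, hy i hi]
  simp [hDF, key _ hx, key _ hy, key _ hxy]
end

section
/- Suppose M_1,...,M_n are n×m matrices over F_q defined by rows (M_i)_j = DP(s_j, s_i) for a basis s_1,...,s_n of F_q^n, where P is a homogeneous quadratic map vanishing on a subspace O_2 of dimension o_2 whose polar map DP sends O_2 × F_q^n into a subspace Q_2 of dimension o_2. Then for any o = Σ c_i s_i ∈ O_2, the matrix M = Σ_{i=1}^n c_i M_i has rank at most o_2. -/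
/-- Rectangular min-rank: for `o = Σ cᵢ sᵢ ∈ O₂`, the matrix `M = Σ cᵢ Mᵢ`
(whose rows are `DP(sⱼ, o)` ∈ Q₂) has rank at most `o₂ = dim Q₂`. -/
theorem rectangular_minrank_low_rank {F : Type*} [Field F] [Fintype F]
    {n m o₂ : ℕ}
    (P : (Fin n → F) → (Fin m → F))
    (A : Fin m → Matrix (Fin n) (Fin n) F)
    (hP : ∀ x k, P x k = ∑ i, ∑ j, A k i j * x i * x j)
    (DP : (Fin n → F) → (Fin n → F) → (Fin m → F))
    (hDP : ∀ x w, DP x w = P (x + w) - P x - P w)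
    (O₂ : Submodule F (Fin n → F)) (Q₂ : Submodule F (Fin m → F))
    (hO₂ : Module.finrank F O₂ = o₂) (hQ₂ : Module.finrank F Q₂ = o₂)
    (hPO : ∀ x ∈ O₂, P x = 0)
    (hDPQ : ∀ (x : Fin n → F), ∀ o ∈ O₂, DP x o ∈ Q₂)
    (s : Module.Basis (Fin n) F (Fin n → F))
    (M : Fin n → Matrix (Fin n) (Fin m) F)
    (hM : ∀ i j k, M i j k = DP (s j) (s i) k) :
    ∀ c : Fin n → F, (∑ i, c i • (s i : Fin n → F)) ∈ O₂ →
      Matrix.rank (∑ i, c i • M i) ≤ o₂ := by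
  intro c hc
  have hDP' : ∀ x w k, DP x w k = ∑ i, ∑ j, A k i j * (x i * w j + w i * x j) := by
    intro x w k
    rw [hDP]
    simp only [Pi.sub_apply, Pi.add_apply, hP]
    rw [← Finset.sum_sub_distrib, ← Finset.sum_sub_distrib]
    refine Finset.sum_congr rfl fun i _ => ?_
    rw [← Finset.sum_sub_distrib, ← Finset.sum_sub_distrib]
    refine Finset.sum_congr rfl fun j _ => ?_
    ring
  set C : (Fin n → F) → Matrix (Fin m) (Fin n) F :=
    fun x k j => ∑ i, (A k i j + A k j i) * x i with hC
  have key : ∀ x w, DP x w = (C x).mulVec w := by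
    intro x w
    funext k
    rw [hDP']
    have step : ∑ i, ∑ j, A k i j * (x i * w j + w i * x j)
        = ∑ j, (∑ i, (A k i j + A k j i) * x i) * w j := by
      calc ∑ i, ∑ j, A k i j * (x i * w j + w i * x j)
          = ∑ i, ∑ j, (A k i j * x i * w j + A k i j * w i * x j) := by
            refine Finset.sum_congr rfl fun i _ => Finset.sum_congr rfl fun j _ => by ring
        _ = (∑ i, ∑ j, A k i j * x i * w j) + ∑ i, ∑ j, A k i j * w i * x j := by
            simp [Finset.sum_add_distrib]
        _ = (∑ j, ∑ i, A k i j * x i * w j) + ∑ j, ∑ i, A k j i * w j * x i := by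
            rw [Finset.sum_comm]
        _ = ∑ j, (∑ i, (A k i j + A k j i) * x i) * w j := by
            rw [← Finset.sum_add_distrib]
            refine Finset.sum_congr rfl fun j _ => ?_
            rw [Finset.sum_mul, ← Finset.sum_add_distrib]
            refine Finset.sum_congr rfl fun i _ => by ring
    rw [step]
    simp [Matrix.mulVec, dotProduct, hC]
  set o : Fin n → F := ∑ i, c i • (s i : Fin n → F) with ho
  set N : Matrix (Fin n) (Fin m) F := ∑ i, c i • M i with hN
  have hrow : ∀ j, N j ∈ Q₂ := by
    intro j
    have h1 : N j = DP (s j) o := by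
      rw [key (s j) o, ho, ← Matrix.mulVecLin_apply, map_sum]
      funext k
      simp only [hN, Matrix.sum_apply, Matrix.smul_apply, smul_eq_mul, hM,
        Finset.sum_apply, Pi.smul_apply, map_smul, Matrix.mulVecLin_apply, ← key]
    rw [h1]
    exact hDPQ (s j) o hc
  have hle : LinearMap.range (Matrix.mulVecLin N.transpose) ≤ Q₂ := by
    rintro y ⟨v, rfl⟩
    have h2 : N.transpose.mulVec v = ∑ j, v j • N j := by
      funext k
      simp [Matrix.mulVec, dotProduct, Matrix.transpose_apply, Finset.sum_apply,
        mul_comm]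
    rw [Matrix.mulVecLin_apply, h2]
    exact Submodule.sum_mem _ fun j _ => Submodule.smul_mem _ _ (hrow j)
  calc Matrix.rank N = Matrix.rank N.transpose := (Matrix.rank_transpose N).symm
    _ = Module.finrank F (LinearMap.range (Matrix.mulVecLin N.transpose)) := by
        rw [Matrix.rank]
    _ ≤ Module.finrank F Q₂ := Submodule.finrank_mono hle
    _ = o₂ := hQ₂
end
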